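/- arXiv:2206.15386 — 8 statements merged into one kernel-verified Lean document; each statement's English description precedes it below -/
import Mathlib

section
/- Let F be a 3×3 real matrix with positive determinant, {t₁, t₂, n} an orthonormal basis of ℝ³, and F = R·A the QR decomposition of F with respect to that basis, where A = A_nn n⊗n + A_{t₁t₁} t₁⊗t₁ + A_{t₂t₂} t₂⊗t₂ + A_{t₁n} t₁⊗n + A_{t₂n} t₂⊗n + A_{t₁t₂} t₁⊗t₂ with A_nn, A_{t₁t₁}, A_{t₂t₂} > 0. Then A_nn = 1 / |F^{-T} n|, where F^{-T} is the inverse transpose of F and |·| is the Euclidean norm. -/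
open Matrix

private lemma vmv_mulVec (a b c : Fin 3 → ℝ) :
    vecMulVec a b *ᵥ c = (b ⬝ᵥ c) • a := by
  ext i
  simp [mulVec, vecMulVec_apply, dotProduct, Finset.mul_sum, mul_comm, mul_assoc, mul_left_comm]

private lemma vmv_transpose (a b : Fin 3 → ℝ) :
    (vecMulVec a b)ᵀ = vecMulVec b a := by
  ext i j; simp [vecMulVec_apply, mul_comm]

/-- In the QR decomposition `F = R · A` of a matrix `F` with positive determinant
with respect to an orthonormal basis `{t₁, t₂, n}`, the coefficient `A_nn` equals
`1 / |F⁻ᵀ n|`. -/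
theorem Ann_eq_inv_norm_invTranspose_mulVec
    (F : Matrix (Fin 3) (Fin 3) ℝ) (hF : 0 < F.det)
    (t₁ t₂ n : Fin 3 → ℝ)
    (ht₁ : t₁ ⬝ᵥ t₁ = 1) (ht₂ : t₂ ⬝ᵥ t₂ = 1) (hn : n ⬝ᵥ n = 1)
    (ht₁t₂ : t₁ ⬝ᵥ t₂ = 0) (ht₁n : t₁ ⬝ᵥ n = 0) (ht₂n : t₂ ⬝ᵥ n = 0)
    (R : Matrix (Fin 3) (Fin 3) ℝ) (hR : Rᵀ * R = 1) (hRdet : R.det = 1)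
    (Ann At₁t₁ At₂t₂ : ℝ) (At₁n At₂n At₁t₂ : ℝ)
    (hAnn : 0 < Ann) (hAt₁t₁ : 0 < At₁t₁) (hAt₂t₂ : 0 < At₂t₂)
    (hFRA : F = R *
      (Ann • vecMulVec n n + At₁t₁ • vecMulVec t₁ t₁ + At₂t₂ • vecMulVec t₂ t₂ +
        At₁n • vecMulVec t₁ n + At₂n • vecMulVec t₂ n + At₁t₂ • vecMulVec t₁ t₂)) :
    Ann = 1 / Real.sqrt (((F⁻¹)ᵀ *ᵥ n) ⬝ᵥ ((F⁻¹)ᵀ *ᵥ n)) := by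
  set A : Matrix (Fin 3) (Fin 3) ℝ :=
      Ann • vecMulVec n n + At₁t₁ • vecMulVec t₁ t₁ + At₂t₂ • vecMulVec t₂ t₂ +
        At₁n • vecMulVec t₁ n + At₂n • vecMulVec t₂ n + At₁t₂ • vecMulVec t₁ t₂ with hA
  set w : Fin 3 → ℝ := Ann⁻¹ • (R *ᵥ n) with hw
  have hnt₁ : n ⬝ᵥ t₁ = 0 := by rw [dotProduct_comm]; exact ht₁n
  have hnt₂ : n ⬝ᵥ t₂ = 0 := by rw [dotProduct_comm]; exact ht₂n
  have hAtn : Aᵀ *ᵥ n = Ann • n := by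
    simp [hA, transpose_add, transpose_smul, vmv_transpose, add_mulVec, smul_mulVec,
      vmv_mulVec, hn, ht₁n, ht₂n, hnt₁, hnt₂]
  have hRtR : ∀ v : Fin 3 → ℝ, Rᵀ *ᵥ (R *ᵥ v) = v := by
    intro v; rw [mulVec_mulVec, hR, one_mulVec]
  have hFtw : Fᵀ *ᵥ w = n := by
    rw [hFRA, transpose_mul, hw, ← mulVec_mulVec, mulVec_smul, hRtR, mulVec_smul, hAtn]
    rw [smul_smul, inv_mul_cancel₀ hAnn.ne', one_smul]
  have hFdet : F.det ≠ 0 := hF.ne'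
  have hFt : (Fᵀ).det ≠ 0 := by rwa [det_transpose]
  have hwn : (F⁻¹)ᵀ *ᵥ n = w := by
    rw [← hFtw, transpose_nonsing_inv, mulVec_mulVec, nonsing_inv_mul _ (by rwa [isUnit_iff_ne_zero]), one_mulVec]
  have hRn : (R *ᵥ n) ⬝ᵥ (R *ᵥ n) = 1 := by
    calc (R *ᵥ n) ⬝ᵥ (R *ᵥ n) = n ⬝ᵥ (Rᵀ *ᵥ (R *ᵥ n)) := by
          rw [dotProduct_mulVec, mulVec_transpose, dotProduct_comm]
      _ = 1 := by rw [hRtR, hn]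
  have hww : w ⬝ᵥ w = (Ann⁻¹) ^ 2 := by
    rw [hw, smul_dotProduct, dotProduct_smul, hRn, smul_eq_mul, smul_eq_mul]; ring
  rw [hwn, hww, Real.sqrt_sq (by positivity)]
  field_simp
end

section
/- Let W: {2×2 matrices with positive determinant} → ℝ be defined by W(F) = (μ/2)(|F|² − 2 − 2 log det F) + (λ/2)(det F − 1)², with μ, λ > 0. Then W(F) ≥ 0 for all F with det F > 0, and W(F) = 0 if and only if F ∈ SO(2). -/
set_option maxHeartbeats 800000


open Matrix

/-- The 2D compressible neo-Hookean energy
`W(F) = (μ/2)(|F|² − 2 − 2 log det F) + (λ/2)(det F − 1)²` is nonnegative on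
matrices with positive determinant, and vanishes exactly on `SO(2)`. -/
theorem neoHookean2D_nonneg_and_zero_iff_SO2
    (μ lam : ℝ) (hμ : 0 < μ) (hlam : 0 < lam)
    (W : Matrix (Fin 2) (Fin 2) ℝ → ℝ)
    (hW : ∀ F, W F = μ / 2 * ((∑ i, ∑ j, (F i j) ^ 2) - 2 - 2 * Real.log F.det) +
      lam / 2 * (F.det - 1) ^ 2) :
    ∀ F : Matrix (Fin 2) (Fin 2) ℝ, 0 < F.det →
      0 ≤ W F ∧ (W F = 0 ↔ Fᵀ * F = 1 ∧ F.det = 1) := by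
  intro F hF
  set a := F 0 0 with ha
  set b := F 0 1 with hb
  set c := F 1 0 with hc
  set d := F 1 1 with hd
  have hdet : F.det = a * d - b * c := Matrix.det_fin_two F
  have hsum : (∑ i, ∑ j, (F i j) ^ 2) = a ^ 2 + b ^ 2 + c ^ 2 + d ^ 2 := by
    simp [Fin.sum_univ_two]; ring
  have hlog : Real.log F.det ≤ F.det - 1 := Real.log_le_sub_one_of_pos hF
  have h2det : 2 * F.det ≤ a ^ 2 + b ^ 2 + c ^ 2 + d ^ 2 := by
    nlinarith [sq_nonneg (a - d), sq_nonneg (b + c)]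
  have hterm1 : 0 ≤ (∑ i, ∑ j, (F i j) ^ 2) - 2 - 2 * Real.log F.det := by
    rw [hsum]; linarith
  have hnn : 0 ≤ W F := by
    rw [hW F]
    have h1 : 0 ≤ μ / 2 * ((∑ i, ∑ j, (F i j) ^ 2) - 2 - 2 * Real.log F.det) := by
      positivity
    have h2 : 0 ≤ lam / 2 * (F.det - 1) ^ 2 := by positivity
    linarith
  refine ⟨hnn, ?_, ?_⟩
  · intro h0
    rw [hW F] at h0
    have h1 : 0 ≤ μ / 2 * ((∑ i, ∑ j, (F i j) ^ 2) - 2 - 2 * Real.log F.det) := by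
      positivity
    have h2 : 0 ≤ lam / 2 * (F.det - 1) ^ 2 := by positivity
    have hz2 : lam / 2 * (F.det - 1) ^ 2 = 0 := le_antisymm (by linarith) h2
    have hd1 : F.det = 1 := by
      have hsq : (F.det - 1) ^ 2 = 0 := by
        rcases mul_eq_zero.mp hz2 with h | h
        · exfalso; have : lam / 2 ≠ 0 := by positivity
          exact this h
        · exact h
      have := pow_eq_zero_iff (n := 2) (by norm_num) |>.mp hsq
      linarith
    have hz1 : μ / 2 * ((∑ i, ∑ j, (F i j) ^ 2) - 2 - 2 * Real.log F.det) = 0 :=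
      le_antisymm (by linarith) h1
    have hL : Real.log F.det = 0 := by rw [hd1]; exact Real.log_one
    have hS : a ^ 2 + b ^ 2 + c ^ 2 + d ^ 2 = 2 := by
      have hterm0 : (∑ i, ∑ j, (F i j) ^ 2) - 2 - 2 * Real.log F.det = 0 := by
        rcases mul_eq_zero.mp hz1 with h | h
        · exfalso; have : μ / 2 ≠ 0 := by positivity
          exact this h
        · exact h
      rw [hL] at hterm0
      rw [← hsum]; linarith
    rw [hd1] at hdet
    have h3 : (a - d) ^ 2 + (b + c) ^ 2 = 0 := by nlinarith
    have h4 := (add_eq_zero_iff_of_nonneg (sq_nonneg (a - d)) (sq_nonneg (b + c))).mp h3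
    have h1' : a = d := by
      have := pow_eq_zero_iff (n := 2) (by norm_num) |>.mp h4.1
      linarith
    have h2' : b = -c := by
      have := pow_eq_zero_iff (n := 2) (by norm_num) |>.mp h4.2
      linarith
    have hA : a ^ 2 + c ^ 2 = 1 := by linear_combination a * h1' + c * h2' - hdet
    have hB : b ^ 2 + d ^ 2 = 1 := by linear_combination -d * h1' + b * h2' - hdet
    have hC : a * b + c * d = 0 := by linear_combination b * h1' + d * h2'
    refine ⟨?_, hd1⟩
    ext i j
    fin_cases i <;> fin_cases j <;>
      simp [Matrix.mul_apply, Fin.sum_univ_two, Matrix.transpose_apply,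
        Matrix.one_apply, ← ha, ← hb, ← hc, ← hd] <;>
      first
        | linear_combination hA
        | linear_combination hB
        | linear_combination hC
  · rintro ⟨horth, hd1⟩
    have e00 := congrFun (congrFun horth 0) 0
    have e11 := congrFun (congrFun horth 1) 1
    simp [Matrix.mul_apply, Fin.sum_univ_two, Matrix.transpose_apply,
      Matrix.one_apply, ← ha, ← hb, ← hc, ← hd] at e00 e11
    have hS2 : (∑ i, ∑ j, (F i j) ^ 2) = 2 := by
      rw [hsum]; linear_combination e00 + e11
    rw [hW F, hS2, hd1]
    simp [Real.log_one]
end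

section
/- Let μ, λ > 0 and define g(A₁₁, A₁₂, A₂₂) = (μ/2)(A₁₁² + A₁₂² + A₂₂² − 2 − 2 log(A₁₁A₂₂)) + (λ/2)(A₁₁A₂₂ − 1)² for A₁₁, A₂₂ > 0 and A₁₂ ∈ ℝ. Then for each fixed A₁₁ > 0, the minimum of g over A₂₂ > 0 and A₁₂ ∈ ℝ is attained uniquely at A₁₂ = 0 and A₂₂ = A₂₂*(A₁₁) := (λA₁₁ + √(4μ² + 4μλA₁₁² + λ²A₁₁²)) / (2(μ + λA₁₁²)). -/
/-- For the 2D neo-Hookean energy evaluated at the upper-triangular matrix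
with entries `(A₁₁, A₁₂; 0, A₂₂)`, the minimum over `A₂₂ > 0` and `A₁₂ ∈ ℝ`
(for fixed `A₁₁ > 0`) is attained uniquely at `A₁₂ = 0` and
`A₂₂ = A₂₂*(A₁₁) = (λA₁₁ + √(4μ² + 4μλA₁₁² + λ²A₁₁²)) / (2(μ + λA₁₁²))`. -/
theorem neoHookean2D_unique_minimizer
    (μ lam : ℝ) (hμ : 0 < μ) (hlam : 0 < lam)
    (g : ℝ → ℝ → ℝ → ℝ)
    (hg : ∀ A₁₁ A₁₂ A₂₂, g A₁₁ A₁₂ A₂₂ =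
      μ / 2 * (A₁₁ ^ 2 + A₁₂ ^ 2 + A₂₂ ^ 2 - 2 - 2 * Real.log (A₁₁ * A₂₂)) +
        lam / 2 * (A₁₁ * A₂₂ - 1) ^ 2)
    (A₁₁ : ℝ) (hA₁₁ : 0 < A₁₁)
    (Astar : ℝ)
    (hAstar : Astar = (lam * A₁₁ + Real.sqrt (4 * μ ^ 2 + 4 * μ * lam * A₁₁ ^ 2 +
      lam ^ 2 * A₁₁ ^ 2)) / (2 * (μ + lam * A₁₁ ^ 2))) :
    (∀ A₁₂ A₂₂ : ℝ, 0 < A₂₂ → g A₁₁ 0 Astar ≤ g A₁₁ A₁₂ A₂₂) ∧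
      (∀ A₁₂ A₂₂ : ℝ, 0 < A₂₂ → g A₁₁ A₁₂ A₂₂ = g A₁₁ 0 Astar →
        A₁₂ = 0 ∧ A₂₂ = Astar) := by
  set c : ℝ := μ + lam * A₁₁ ^ 2 with hc
  have hcpos : 0 < c := by positivity
  have hD : (0:ℝ) ≤ 4 * μ ^ 2 + 4 * μ * lam * A₁₁ ^ 2 + lam ^ 2 * A₁₁ ^ 2 := by positivity
  have hsqrt := Real.sq_sqrt hD
  have hsqrtnn := Real.sqrt_nonneg (4 * μ ^ 2 + 4 * μ * lam * A₁₁ ^ 2 + lam ^ 2 * A₁₁ ^ 2)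
  have hspos : 0 < Astar := by
    rw [hAstar]
    have : 0 < lam * A₁₁ + Real.sqrt (4 * μ ^ 2 + 4 * μ * lam * A₁₁ ^ 2 +
        lam ^ 2 * A₁₁ ^ 2) := by positivity
    positivity
  have h2cs : Astar * (2 * c) = lam * A₁₁ + Real.sqrt (4 * μ ^ 2 + 4 * μ * lam * A₁₁ ^ 2 +
      lam ^ 2 * A₁₁ ^ 2) := by
    rw [hAstar]; field_simp
  have hsq : (Astar * (2 * c)) ^ 2 = (lam * A₁₁ + Real.sqrt (4 * μ ^ 2 +
      4 * μ * lam * A₁₁ ^ 2 + lam ^ 2 * A₁₁ ^ 2)) ^ 2 := by rw [h2cs]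
  have hq : c * Astar ^ 2 = lam * A₁₁ * Astar + μ := by
    have hq4 : (4 * c) * (c * Astar ^ 2) = (4 * c) * (lam * A₁₁ * Astar + μ) := by
      linear_combination hsq - 2 * lam * A₁₁ * h2cs + hsqrt - 4 * μ * hc
    exact mul_left_cancel₀ (by positivity) hq4
  have key : ∀ A₁₂ t : ℝ, 0 < t →
      g A₁₁ 0 Astar + μ / 2 * A₁₂ ^ 2 + c / 2 * (t - Astar) ^ 2 ≤ g A₁₁ A₁₂ t := by
    intro A₁₂ t ht
    rw [hg, hg]
    have hlog : Real.log (A₁₁ * t) - Real.log (A₁₁ * Astar) ≤ t / Astar - 1 := by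
      have h2 := Real.log_le_sub_one_of_pos
        (show 0 < (A₁₁ * t) / (A₁₁ * Astar) by positivity)
      rw [Real.log_div (by positivity) (by positivity),
        mul_div_mul_left _ _ (ne_of_gt hA₁₁)] at h2
      exact h2
    have ht' : μ * (t / Astar - 1) = (c * Astar - lam * A₁₁) * (t - Astar) := by
      field_simp
      linear_combination (Astar - t) * hq
    have hid : μ / 2 * (t ^ 2 - Astar ^ 2)
        + lam / 2 * ((A₁₁ * t - 1) ^ 2 - (A₁₁ * Astar - 1) ^ 2)
        - c / 2 * (t - Astar) ^ 2 = μ * (t / Astar - 1) := by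
      rw [ht', hc]; ring
    have hmul := mul_le_mul_of_nonneg_left hlog (le_of_lt hμ)
    linarith [hid, hmul]
  constructor
  · intro A₁₂ A₂₂ hA₂₂
    have h := key A₁₂ A₂₂ hA₂₂
    have h1 : 0 ≤ μ / 2 * A₁₂ ^ 2 := by positivity
    have h2 : 0 ≤ c / 2 * (A₂₂ - Astar) ^ 2 := by positivity
    linarith
  · intro A₁₂ A₂₂ hA₂₂ heq
    have h := key A₁₂ A₂₂ hA₂₂
    have h1 : 0 ≤ μ / 2 * A₁₂ ^ 2 := by positivity
    have h2 : 0 ≤ c / 2 * (A₂₂ - Astar) ^ 2 := by positivity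
    have e1 : A₁₂ ^ 2 = 0 := by nlinarith
    have e2 : (A₂₂ - Astar) ^ 2 = 0 := by nlinarith
    refine ⟨sq_eq_zero_iff.mp e1, ?_⟩
    have := sq_eq_zero_iff.mp e2
    linarith
end

section
/- Let μ, λ > 0 and define A₂₂*(A₁₁) = (λA₁₁ + √(4μ² + 4μλA₁₁² + λ²A₁₁²)) / (2(μ + λA₁₁²)) for A₁₁ > 0. Then A₂₂*(A₁₁) > 1 if and only if A₁₁ < 1. In particular A₂₂*(1) = 1. -/
/-- For `μ, λ > 0` and `A₁₁ > 0`, the minimizer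
`A₂₂*(A₁₁) = (λA₁₁ + √(4μ² + 4μλA₁₁² + λ²A₁₁²)) / (2(μ + λA₁₁²))`
satisfies `A₂₂*(A₁₁) > 1` iff `A₁₁ < 1`; in particular `A₂₂*(1) = 1`. -/
theorem A22star_gt_one_iff
    (μ lam : ℝ) (hμ : 0 < μ) (hlam : 0 < lam)
    (Astar : ℝ → ℝ)
    (hAstar : ∀ A₁₁ : ℝ, Astar A₁₁ = (lam * A₁₁ + Real.sqrt (4 * μ ^ 2 +
      4 * μ * lam * A₁₁ ^ 2 + lam ^ 2 * A₁₁ ^ 2)) / (2 * (μ + lam * A₁₁ ^ 2))) :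
    (∀ A₁₁ : ℝ, 0 < A₁₁ → (1 < Astar A₁₁ ↔ A₁₁ < 1)) ∧ Astar 1 = 1 := by
  constructor
  · intro A hA
    rw [hAstar]
    have hm : 0 < μ + lam * A ^ 2 := by positivity
    have hd : 0 < 2 * (μ + lam * A ^ 2) := by positivity
    have hD : (0:ℝ) ≤ 4 * μ ^ 2 + 4 * μ * lam * A ^ 2 + lam ^ 2 * A ^ 2 := by positivity
    rw [lt_div_iff₀ hd]
    have key : (1 * (2 * (μ + lam * A ^ 2)) <
        lam * A + Real.sqrt (4 * μ ^ 2 + 4 * μ * lam * A ^ 2 + lam ^ 2 * A ^ 2)) ↔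
        (2 * (μ + lam * A ^ 2) - lam * A <
        Real.sqrt (4 * μ ^ 2 + 4 * μ * lam * A ^ 2 + lam ^ 2 * A ^ 2)) := by
      constructor <;> intro h <;> linarith
    rw [key]
    constructor
    · intro h
      by_contra h1
      push_neg at h1
      have hR0 : 0 ≤ 2 * (μ + lam * A ^ 2) - lam * A := by
        nlinarith [mul_pos hlam hA]
      have h2 := (Real.lt_sqrt hR0).mp h
      nlinarith [mul_pos (mul_pos hlam hA) hm]
    · intro h
      rcases le_or_gt 0 (2 * (μ + lam * A ^ 2) - lam * A) with hR0 | hR0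
      · rw [Real.lt_sqrt hR0]
        nlinarith [mul_pos (mul_pos hlam hA) hm]
      · exact lt_of_lt_of_le hR0 (Real.sqrt_nonneg _)
  · rw [hAstar]
    have hs : Real.sqrt (4 * μ ^ 2 + 4 * μ * lam * 1 ^ 2 + lam ^ 2 * 1 ^ 2) = 2 * μ + lam := by
      rw [show 4 * μ ^ 2 + 4 * μ * lam * (1:ℝ) ^ 2 + lam ^ 2 * 1 ^ 2 = (2 * μ + lam) ^ 2 by ring,
        Real.sqrt_sq (by linarith)]
    rw [hs]
    field_simp
    ring
end

section
/- Let W(F) = a|F|² + b|cof F|² + h(det F) for 3×3 matrices F with positive determinant, where a, b > 0 and h: (0,∞) → ℝ is any function. Then for any orthonormal basis {t₁, t₂, n} and the upper-triangular parametrization A(A_nn, A_{t₁t₁}, A_{t₂t₂}, A_{t₁n}, A_{t₂n}, A_{t₁t₂}), the function (A_nn, A_{t₁n}, A_{t₂n}, ...) ↦ W(A) satisfies ∂²W/(∂A_nn ∂A_{t₁n}) = 0 and ∂²W/(∂A_nn ∂A_{t₂n}) = 0 at every point (assuming h is twice differentiable). -/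
open Matrix

private lemma frob_trace' (C : Matrix (Fin 3) (Fin 3) ℝ) :
    ∑ i, ∑ j, (C i j)^2 = Matrix.trace (C * Cᵀ) := by
  simp [Matrix.trace, Matrix.mul_apply, Matrix.diag, sq]

private lemma frob_conj' (A B : Matrix (Fin 3) (Fin 3) ℝ) (hB : B * Bᵀ = 1) :
    ∑ i, ∑ j, ((Bᵀ * A * B) i j)^2 = ∑ i, ∑ j, (A i j)^2 := by
  rw [frob_trace', frob_trace']
  have h1 : B * (Bᵀ * (Aᵀ * B)) = Aᵀ * B := by
    rw [← Matrix.mul_assoc, hB, Matrix.one_mul]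
  have : (Bᵀ * A * B) * (Bᵀ * A * B)ᵀ = Bᵀ * (A * Aᵀ) * B := by
    simp only [Matrix.transpose_mul, Matrix.transpose_transpose, Matrix.mul_assoc, h1]
  rw [this, Matrix.trace_mul_comm, ← Matrix.mul_assoc, hB, Matrix.one_mul]

private lemma adj_orth' (B : Matrix (Fin 3) (Fin 3) ℝ) (hB : B * Bᵀ = 1) :
    Matrix.adjugate B = B.det • Bᵀ := by
  have hB' : Bᵀ * B = 1 := mul_eq_one_comm.mp hB
  calc Matrix.adjugate B = (Bᵀ * B) * Matrix.adjugate B := by rw [hB', Matrix.one_mul]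
    _ = Bᵀ * (B * Matrix.adjugate B) := by rw [Matrix.mul_assoc]
    _ = B.det • Bᵀ := by rw [Matrix.mul_adjugate]; simp [Matrix.mul_smul]

private lemma mr_key
    (a b : ℝ) (h : ℝ → ℝ)
    (t₁ t₂ n : Fin 3 → ℝ)
    (ht₁ : t₁ ⬝ᵥ t₁ = 1) (ht₂ : t₂ ⬝ᵥ t₂ = 1) (hn : n ⬝ᵥ n = 1)
    (ht₁t₂ : t₁ ⬝ᵥ t₂ = 0) (ht₁n : t₁ ⬝ᵥ n = 0) (ht₂n : t₂ ⬝ᵥ n = 0)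
    (W : Matrix (Fin 3) (Fin 3) ℝ → ℝ)
    (hW : ∀ M, W M = a * (∑ i, ∑ j, (M i j) ^ 2) +
      b * (∑ i, ∑ j, (((Matrix.adjugate M)ᵀ) i j) ^ 2) + h M.det)
    (d1 d2 x q r p : ℝ) :
    W (x • vecMulVec n n + d1 • vecMulVec t₁ t₁ + d2 • vecMulVec t₂ t₂ +
        q • vecMulVec t₁ n + r • vecMulVec t₂ n + p • vecMulVec t₁ t₂)
      = a * (d1^2 + p^2 + q^2 + d2^2 + r^2 + x^2) +
        b * ((d2*x)^2 + (p*x)^2 + (p*r - q*d2)^2 + (d1*x)^2 + (d1*r)^2 + (d1*d2)^2) +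
        h (d1*d2*x) := by
  set P : Matrix (Fin 3) (Fin 3) ℝ := Matrix.of ![t₁, t₂, n] with hP
  set T : Matrix (Fin 3) (Fin 3) ℝ := !![d1,p,q;0,d2,r;0,0,x] with hT
  simp only [dotProduct, Fin.sum_univ_three] at ht₁ ht₂ hn ht₁t₂ ht₁n ht₂n
  have hPPt : P * Pᵀ = 1 := by
    ext i j
    fin_cases i <;> fin_cases j <;>
      simp only [hP, Matrix.mul_apply, Matrix.transpose_apply, Fin.sum_univ_three,
        Matrix.one_apply, Matrix.of_apply, Matrix.cons_val_zero, Matrix.cons_val_one,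
        Matrix.head_cons, Matrix.cons_val_two, Matrix.tail_cons] <;>
      norm_num [Fin.ext_iff] <;> linarith [ht₁, ht₂, hn, ht₁t₂, ht₁n, ht₂n]
  have hPtP : Pᵀ * P = 1 := mul_eq_one_comm.mp hPPt
  have hPtPt : Pᵀ * Pᵀᵀ = 1 := by rw [Matrix.transpose_transpose]; exact hPtP
  have hdet1 : P.det * P.det = 1 := by
    have := congrArg Matrix.det hPPt
    rwa [Matrix.det_mul, Matrix.det_transpose, Matrix.det_one] at this
  have hM : (x • vecMulVec n n + d1 • vecMulVec t₁ t₁ + d2 • vecMulVec t₂ t₂ +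
      q • vecMulVec t₁ n + r • vecMulVec t₂ n + p • vecMulVec t₁ t₂)
      = Pᵀ * T * P := by
    ext i j
    fin_cases i <;> fin_cases j <;>
      simp [hP, hT, Matrix.mul_apply, Fin.sum_univ_three, vecMulVec_apply,
        Matrix.vecHead, Matrix.vecTail] <;> ring
  rw [hM, hW]
  -- Frobenius norm of M
  have hfrob : ∑ i, ∑ j, ((Pᵀ * T * P) i j)^2 = ∑ i, ∑ j, (T i j)^2 :=
    frob_conj' T P hPPt
  -- determinant
  have hdetM : (Pᵀ * T * P).det = T.det := by
    rw [Matrix.det_mul, Matrix.det_mul, Matrix.det_transpose]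
    calc P.det * T.det * P.det = T.det * (P.det * P.det) := by ring
      _ = T.det := by rw [hdet1, mul_one]
  -- adjugate
  have hadjP : Matrix.adjugate P = P.det • Pᵀ := adj_orth' P hPPt
  have hadjPt : Matrix.adjugate Pᵀ = P.det • P := by
    have := adj_orth' Pᵀ hPtPt
    rwa [Matrix.det_transpose, Matrix.transpose_transpose] at this
  have hadjM : Matrix.adjugate (Pᵀ * T * P) = Pᵀ * Matrix.adjugate T * P := by
    rw [Matrix.adjugate_mul_distrib, Matrix.adjugate_mul_distrib, hadjP, hadjPt]
    simp only [Matrix.smul_mul, Matrix.mul_smul, smul_smul, Matrix.mul_assoc, hdet1, one_smul]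
  have hadjfrob : ∑ i, ∑ j, (((Matrix.adjugate (Pᵀ * T * P))ᵀ) i j)^2
      = ∑ i, ∑ j, (((Matrix.adjugate T)ᵀ) i j)^2 := by
    rw [hadjM]
    have : (Pᵀ * Matrix.adjugate T * P)ᵀ = Pᵀ * (Matrix.adjugate T)ᵀ * P := by
      simp [Matrix.transpose_mul, Matrix.mul_assoc]
    rw [this]
    exact frob_conj' (Matrix.adjugate T)ᵀ P hPPt
  rw [hfrob, hdetM, hadjfrob]
  have e1 : ∑ i, ∑ j, (T i j)^2 = d1^2 + p^2 + q^2 + d2^2 + r^2 + x^2 := by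
    simp [hT, Fin.sum_univ_three, Matrix.vecHead, Matrix.vecTail]; ring
  have e2 : ∑ i, ∑ j, (((Matrix.adjugate T)ᵀ) i j)^2
      = (d2*x)^2 + (p*x)^2 + (p*r - q*d2)^2 + (d1*x)^2 + (d1*r)^2 + (d1*d2)^2 := by
    simp [hT, Matrix.adjugate_fin_three, Fin.sum_univ_three, Matrix.vecHead,
      Matrix.vecTail]; ring
  have e3 : T.det = d1*d2*x := by
    simp [hT, Matrix.det_fin_three, Matrix.vecHead, Matrix.vecTail]
  rw [e1, e2, e3]

/-- For the Mooney–Rivlin type energy `W(F) = a|F|² + b|cof F|² + h(det F)` (with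
`a, b > 0` and `h` twice differentiable), in the upper-triangular parametrization
with respect to an orthonormal basis `{t₁, t₂, n}`, the mixed second partial
derivatives `∂²W/(∂A_nn ∂A_{t₁n})` and `∂²W/(∂A_nn ∂A_{t₂n})` vanish. -/
theorem mooneyRivlin_mixed_partials_vanish
    (a b : ℝ) (ha : 0 < a) (hb : 0 < b)
    (h : ℝ → ℝ) (hh : ContDiff ℝ 2 h)
    (t₁ t₂ n : Fin 3 → ℝ)
    (ht₁ : t₁ ⬝ᵥ t₁ = 1) (ht₂ : t₂ ⬝ᵥ t₂ = 1) (hn : n ⬝ᵥ n = 1)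
    (ht₁t₂ : t₁ ⬝ᵥ t₂ = 0) (ht₁n : t₁ ⬝ᵥ n = 0) (ht₂n : t₂ ⬝ᵥ n = 0)
    (W : Matrix (Fin 3) (Fin 3) ℝ → ℝ)
    (hW : ∀ M, W M = a * (∑ i, ∑ j, (M i j) ^ 2) +
      b * (∑ i, ∑ j, (((Matrix.adjugate M)ᵀ) i j) ^ 2) + h M.det) :
    ∀ Ann At₁t₁ At₂t₂ At₁n At₂n At₁t₂ : ℝ,
      0 < Ann → 0 < At₁t₁ → 0 < At₂t₂ →
      deriv (fun x => deriv (fun y =>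
        W (x • vecMulVec n n + At₁t₁ • vecMulVec t₁ t₁ + At₂t₂ • vecMulVec t₂ t₂ +
            y • vecMulVec t₁ n + At₂n • vecMulVec t₂ n + At₁t₂ • vecMulVec t₁ t₂)) At₁n)
        Ann = 0 ∧
      deriv (fun x => deriv (fun y =>
        W (x • vecMulVec n n + At₁t₁ • vecMulVec t₁ t₁ + At₂t₂ • vecMulVec t₂ t₂ +
            At₁n • vecMulVec t₁ n + y • vecMulVec t₂ n + At₁t₂ • vecMulVec t₁ t₂)) At₂n)
        Ann = 0 := by
  intro Ann d1 d2 q0 r0 p0 _ _ _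
  have key := mr_key a b h t₁ t₂ n ht₁ ht₂ hn ht₁t₂ ht₁n ht₂n W hW d1 d2
  constructor
  · -- variable q (= At₁n)
    have hconst : (fun x : ℝ => deriv (fun y : ℝ =>
        W (x • vecMulVec n n + d1 • vecMulVec t₁ t₁ + d2 • vecMulVec t₂ t₂ +
            y • vecMulVec t₁ n + r0 • vecMulVec t₂ n + p0 • vecMulVec t₁ t₂)) q0)
        = fun _ => deriv (fun y : ℝ => a * y^2 + b * (p0*r0 - y*d2)^2) q0 := by
      funext x
      have heq : (fun y : ℝ =>
          W (x • vecMulVec n n + d1 • vecMulVec t₁ t₁ + d2 • vecMulVec t₂ t₂ +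
              y • vecMulVec t₁ n + r0 • vecMulVec t₂ n + p0 • vecMulVec t₁ t₂))
          = fun y => (a * y^2 + b * (p0*r0 - y*d2)^2) +
            (a * (d1^2 + p0^2 + d2^2 + r0^2 + x^2) +
             b * ((d2*x)^2 + (p0*x)^2 + (d1*x)^2 + (d1*r0)^2 + (d1*d2)^2) +
             h (d1*d2*x)) := by
        funext y
        rw [key x y r0 p0]; ring
      rw [heq]
      exact deriv_add_const _
    rw [hconst]
    exact deriv_const _ _
  · -- variable r (= At₂n)
    have hconst : (fun x : ℝ => deriv (fun y : ℝ =>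
        W (x • vecMulVec n n + d1 • vecMulVec t₁ t₁ + d2 • vecMulVec t₂ t₂ +
            q0 • vecMulVec t₁ n + y • vecMulVec t₂ n + p0 • vecMulVec t₁ t₂)) r0)
        = fun _ => deriv (fun y : ℝ => a * y^2 + b * ((p0*y - q0*d2)^2 + (d1*y)^2)) r0 := by
      funext x
      have heq : (fun y : ℝ =>
          W (x • vecMulVec n n + d1 • vecMulVec t₁ t₁ + d2 • vecMulVec t₂ t₂ +
              q0 • vecMulVec t₁ n + y • vecMulVec t₂ n + p0 • vecMulVec t₁ t₂))
          = fun y => (a * y^2 + b * ((p0*y - q0*d2)^2 + (d1*y)^2)) +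
            (a * (d1^2 + p0^2 + q0^2 + d2^2 + x^2) +
             b * ((d2*x)^2 + (p0*x)^2 + (d1*x)^2 + (d1*d2)^2) +
             h (d1*d2*x)) := by
        funext y
        rw [key x q0 y p0]; ring
      rw [heq]
      exact deriv_add_const _
    rw [hconst]
    exact deriv_const _ _
end

section
/- Let λ, μ > 0 and define W_lin(ε) on symmetric 2×2 matrices as in the isotropic linearized damaged energy: W_lin(ε) = (1/2)(λ + 2μ − λ²/(λ+2μ)) ε₁₁² when ε₂₂ ≥ −(λ/(λ+2μ)) ε₁₁, and W_lin(ε) = ((λ+2μ)/2)(ε₁₁² + ε₂₂²) + λ ε₁₁ε₂₂ when ε₂₂ ≤ −(λ/(λ+2μ)) ε₁₁. Then 0 ≤ W_lin(ε) ≤ (1/2)(2μ|ε|² + λ(tr ε)²) for every symmetric ε, i.e., the effective damaged energy is nonnegative and bounded above by the intact elastic energy. -/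
/-- The isotropic linearized damaged energy is nonnegative and bounded above by
the intact linear elastic energy `(1/2)(2μ|ε|² + λ(tr ε)²)`, for every symmetric
strain `ε = (ε₁₁, ε₁₂, ε₂₂)`. -/
theorem Wlin_between_zero_and_intact
    (lam μ : ℝ) (hlam : 0 < lam) (hμ : 0 < μ) :
    ∀ ε₁₁ ε₁₂ ε₂₂ W : ℝ,
      ((ε₂₂ ≥ -(lam / (lam + 2 * μ)) * ε₁₁ ∧
          W = 1 / 2 * (lam + 2 * μ - lam ^ 2 / (lam + 2 * μ)) * ε₁₁ ^ 2) ∨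
        (ε₂₂ ≤ -(lam / (lam + 2 * μ)) * ε₁₁ ∧
          W = (lam + 2 * μ) / 2 * (ε₁₁ ^ 2 + ε₂₂ ^ 2) + lam * ε₁₁ * ε₂₂)) →
      0 ≤ W ∧ W ≤ 1 / 2 * (2 * μ * (ε₁₁ ^ 2 + 2 * ε₁₂ ^ 2 + ε₂₂ ^ 2) +
        lam * (ε₁₁ + ε₂₂) ^ 2) := by
  intro x w y W h
  have ha : (0:ℝ) < lam + 2 * μ := by linarith
  have hdiv : lam ^ 2 / (lam + 2 * μ) * (lam + 2 * μ) = lam ^ 2 :=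
    div_mul_cancel₀ _ (ne_of_gt ha)
  rcases h with ⟨_, hW⟩ | ⟨_, hW⟩
  · subst hW
    constructor
    · have hd : lam ^ 2 / (lam + 2 * μ) ≤ lam := by
        rw [div_le_iff₀ ha]; nlinarith
      nlinarith [hd, sq_nonneg x, mul_nonneg hμ.le (sq_nonneg x)]
    · nlinarith [sq_nonneg ((lam + 2*μ) * y + lam * x), sq_nonneg w,
        mul_pos ha hμ, sq_nonneg x]
  · subst hW
    constructor
    · nlinarith [sq_nonneg (x + y), sq_nonneg x, sq_nonneg y]
    · nlinarith [sq_nonneg w]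
end

section
/- Let λ, μ > 0 and W_lin(ε) be the isotropic linearized damaged energy with crack normal e₂ (as defined by the two branches above). Then ∂W_lin/∂ε₁₂ = 0 everywhere, and ∂W_lin/∂ε₂₂ = min{λε₁₁ + (λ+2μ)ε₂₂, 0}; that is, the normal traction on the crack plane is zero when the crack opens and equals the intact-material normal stress when the crack closes. -/
open Classical

lemma hasDerivAt_mul_abs (x : ℝ) : HasDerivAt (fun y : ℝ => y * |y|) (2 * |x|) x := by
  rcases lt_trichotomy x 0 with hx | hx | hx
  · have h : (fun y : ℝ => y * |y|) =ᶠ[nhds x] fun y => -(y * y) := by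
      filter_upwards [Iio_mem_nhds hx] with y hy
      rw [abs_of_neg hy]; ring
    have : HasDerivAt (fun y : ℝ => -(y * y)) (2 * |x|) x := by
      refine (((hasDerivAt_id' x).mul (hasDerivAt_id' x)).neg).congr_deriv ?_
      simp [abs_of_neg hx]; ring
    exact this.congr_of_eventuallyEq h
  · subst hx
    rw [hasDerivAt_iff_tendsto_slope]
    have h : slope (fun y : ℝ => y * |y|) 0 =ᶠ[nhdsWithin 0 {(0:ℝ)}ᶜ] fun y => |y| := by
      filter_upwards [self_mem_nhdsWithin] with y hy
      have hy' : y ≠ 0 := hy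
      field_simp [slope_def_field]
      rw [slope_def_field]; field_simp; simp [mul_comm]
    have habs : Filter.Tendsto (fun y : ℝ => |y|) (nhdsWithin 0 {(0:ℝ)}ᶜ) (nhds 0) := by
      have := (continuous_abs.tendsto (0:ℝ)).mono_left
        (nhdsWithin_le_nhds (s := {(0:ℝ)}ᶜ))
      simpa using this
    simpa using habs.congr' h.symm
  · have h : (fun y : ℝ => y * |y|) =ᶠ[nhds x] fun y => y * y := by
      filter_upwards [Ioi_mem_nhds hx] with y hy
      rw [abs_of_pos hy]
    have : HasDerivAt (fun y : ℝ => y * y) (2 * |x|) x := by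
      refine ((hasDerivAt_id' x).mul (hasDerivAt_id' x)).congr_deriv ?_
      simp [abs_of_pos hx]; ring
    exact this.congr_of_eventuallyEq h

/-- For the isotropic linearized damaged energy `W(ε₁₁, ε₁₂, ε₂₂)` with crack
normal `e₂`, the shear stress `∂W/∂ε₁₂` vanishes everywhere and the normal
stress is `∂W/∂ε₂₂ = min{λε₁₁ + (λ+2μ)ε₂₂, 0}`. -/
theorem Wlin_tractions
    (lam μ : ℝ) (hlam : 0 < lam) (hμ : 0 < μ)
    (W : ℝ → ℝ → ℝ → ℝ)
    (hW : ∀ a b d : ℝ, W a b d =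
      if d > -(lam / (lam + 2 * μ)) * a then
        1 / 2 * (lam + 2 * μ - lam ^ 2 / (lam + 2 * μ)) * a ^ 2
      else
        (lam + 2 * μ) / 2 * a ^ 2 + lam * a * d + (lam + 2 * μ) / 2 * d ^ 2) :
    ∀ a b d : ℝ,
      deriv (fun x => W a x d) b = 0 ∧
      deriv (fun x => W a b x) d = min (lam * a + (lam + 2 * μ) * d) 0 := by
  intro a b d
  set k : ℝ := lam + 2 * μ with hk
  have hkpos : 0 < k := by positivity
  have hk0 : k ≠ 0 := ne_of_gt hkpos
  set t : ℝ := -(lam / k) * a with ht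
  have hkt : k * t = -(lam * a) := by
    rw [ht]; field_simp
  set A : ℝ := 1 / 2 * (k - lam ^ 2 / k) * a ^ 2 with hA
  constructor
  · have : (fun x => W a x d) = fun _ => W a 0 d := by
      funext x; rw [hW, hW]
    rw [this, deriv_const]
  · -- rewrite W a b · as a differentiable closed form
    have hfun : (fun x => W a b x)
        = fun x => A + k / 4 * ((x - t) ^ 2 - (x - t) * |x - t|) := by
      funext x
      rw [hW]
      by_cases hx : x > t
      · rw [if_pos hx]
        have h1 : |x - t| = x - t := abs_of_pos (by linarith)
        rw [h1]; ring
      · rw [if_neg hx]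
        push_neg at hx
        have h1 : |x - t| = -(x - t) := abs_of_nonpos (by linarith)
        rw [h1]
        have hxt : x - t = x + lam / k * a := by rw [ht]; ring
        rw [hxt, hA]
        field_simp
        ring
    rw [hfun]
    have hd1 : HasDerivAt (fun x : ℝ => (x - t) * |x - t|) (2 * |d - t|) d := by
      have := (hasDerivAt_mul_abs (d - t)).comp d ((hasDerivAt_id d).sub_const t)
      simpa [Function.comp_def] using this
    have hd2 : HasDerivAt (fun x : ℝ => (x - t) ^ 2) (2 * (d - t)) d := by
      have := ((hasDerivAt_id d).sub_const t).pow 2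
      simpa [mul_comm, Pi.pow_def] using this
    have hD : HasDerivAt
        (fun x : ℝ => A + k / 4 * ((x - t) ^ 2 - (x - t) * |x - t|))
        (k / 4 * (2 * (d - t) - 2 * |d - t|)) d :=
      (((hd2.sub hd1).const_mul (k / 4)).const_add A)
    rw [hD.deriv]
    by_cases hdt : d > t
    · have h1 : |d - t| = d - t := abs_of_pos (by linarith)
      have h2 : 0 < lam * a + k * d := by
        have := mul_lt_mul_of_pos_left hdt hkpos
        nlinarith [hkt]
      rw [h1, min_eq_right (le_of_lt h2)]; ring
    · push_neg at hdt
      have h1 : |d - t| = -(d - t) := abs_of_nonpos (by linarith)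
      have h2 : lam * a + k * d ≤ 0 := by
        have := mul_le_mul_of_nonneg_left hdt (le_of_lt hkpos)
        nlinarith [hkt]
      rw [h1, min_eq_left h2]
      linear_combination -hkt
end

section
/- Let μ₁, μ₂, λ̄ > 0 and p, q ≥ 1, and for fixed A₁₁, A₂₂ > 0 and A₁₂ ∈ ℝ define f(A₃₃) = (μ₁/p)((A₁₁² + A₂₂² + A₃₃² + A₁₂²)^{p/2} − 3^{p/2} − 3^{p/2−1} p log(A₁₁A₂₂A₃₃)) + (μ₂/q)((A₁₁²A₂₂² + A₁₁²A₃₃² + A₃₃²A₁₂² + A₂₂²A₃₃²)^{q/2} − 3^{q/2} − 2·3^{q/2−1} q log(A₁₁A₂₂A₃₃)) + (λ̄/2)(A₁₁A₂₂A₃₃ − 1)² for A₃₃ > 0. Then f is strictly convex on (0,∞), tends to +∞ as A₃₃ → 0⁺ and as A₃₃ → ∞, and hence has a unique minimizer A₃₃* > 0. -/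
open Filter Topology Set

private lemma myStrictConvexOn_congr {s : Set ℝ} {f g : ℝ → ℝ}
    (h : StrictConvexOn ℝ s f) (he : Set.EqOn f g s) : StrictConvexOn ℝ s g := by
  refine ⟨h.1, fun x hx y hy hxy a b ha hb hab => ?_⟩
  rw [← he hx, ← he hy, ← he (h.1 hx hy ha.le hb.le hab)]
  exact h.2 hx hy hxy ha hb hab

private lemma myStrictConvexOn_const_mul {s : Set ℝ} {f : ℝ → ℝ} {c : ℝ} (hc : 0 < c)
    (h : StrictConvexOn ℝ s f) : StrictConvexOn ℝ s (fun x => c * f x) := by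
  refine ⟨h.1, fun x hx y hy hxy a b ha hb hab => ?_⟩
  have := h.2 hx hy hxy ha hb hab
  simp only [smul_eq_mul] at this ⊢
  nlinarith [this]

private lemma myConvexOn_rpow_quad (c m s : ℝ) (hc : 0 < c) (hm : 0 ≤ m) (hs : 1/2 ≤ s) :
    ConvexOn ℝ Set.univ (fun x : ℝ => (c + m * x ^ 2) ^ s) := by
  have hs0 : 0 < s := lt_of_lt_of_le (by norm_num) hs
  have hu : ∀ x : ℝ, 0 < c + m * x ^ 2 := fun x => by positivity
  refine convexOn_of_hasDerivWithinAt2_nonneg (f' := fun x => m * (2 * x) * s * (c + m * x ^ 2) ^ (s - 1))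
    (f'' := fun x => (m * 2 * s) * (c + m * x ^ 2) ^ (s - 1)
      + (m * (2 * x) * s) * (m * (2 * x) * (s - 1) * (c + m * x ^ 2) ^ (s - 1 - 1)))
    convex_univ ?_ ?_ ?_ ?_
  · exact ((continuous_const.add (continuous_const.mul (continuous_pow 2))).rpow_const
      (fun x => Or.inl (hu x).ne')).continuousOn
  · intro x _
    have h1 : HasDerivAt (fun x : ℝ => c + m * x ^ 2) (m * (2 * x)) x := by
      simpa using ((hasDerivAt_pow 2 x).const_mul m).const_add c
    have h2 := h1.rpow_const (p := s) (Or.inl (hu x).ne')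
    exact (h2.hasDerivWithinAt).congr_deriv (by ring)
  · intro x _
    have h1 : HasDerivAt (fun x : ℝ => c + m * x ^ 2) (m * (2 * x)) x := by
      simpa using ((hasDerivAt_pow 2 x).const_mul m).const_add c
    have h2 : HasDerivAt (fun x : ℝ => (c + m * x ^ 2) ^ (s - 1))
        (m * (2 * x) * (s - 1) * (c + m * x ^ 2) ^ (s - 1 - 1)) x :=
      h1.rpow_const (Or.inl (hu x).ne')
    have h3 : HasDerivAt (fun x : ℝ => m * (2 * x) * s) (m * 2 * s) x := by
      simpa [mul_assoc] using ((hasDerivAt_id x).const_mul (m * 2)).mul_const s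
    have h4 := h3.mul h2
    refine (h4.hasDerivWithinAt).congr_deriv ?_
    ring
  · intro x _
    have hP : (0:ℝ) ≤ (c + m * x ^ 2) ^ (s - 1 - 1) := Real.rpow_nonneg (hu x).le _
    have hrw : (c + m * x ^ 2) ^ (s - 1) = (c + m * x ^ 2) ^ (s - 1 - 1) * (c + m * x ^ 2) := by
      rw [← Real.rpow_add_one (hu x).ne']
      ring_nf
    rw [hrw]
    have h2s : 0 ≤ 2 * s - 1 := by linarith
    have key : (m * 2 * s) * ((c + m * x ^ 2) ^ (s - 1 - 1) * (c + m * x ^ 2))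
        + (m * (2 * x) * s) * (m * (2 * x) * (s - 1) * (c + m * x ^ 2) ^ (s - 1 - 1))
        = s * (c + m * x ^ 2) ^ (s - 1 - 1) * (2 * m * c + 2 * m ^ 2 * x ^ 2 * (2 * s - 1)) := by
      ring
    rw [key]
    have : 0 ≤ 2 * m * c + 2 * m ^ 2 * x ^ 2 * (2 * s - 1) :=
      add_nonneg (by positivity) (mul_nonneg (by positivity) h2s)
    positivity

private lemma myConvexOn_quad (k d : ℝ) (hd : 0 ≤ d) :
    ConvexOn ℝ Set.univ (fun x : ℝ => d * (k * x - 1) ^ 2) := by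
  refine ⟨convex_univ, fun x _ y _ a b ha hb hab => ?_⟩
  simp only [smul_eq_mul]
  have h : k * (a * x + b * y) - 1 = a * (k * x - 1) + b * (k * y - 1) := by
    linear_combination hab
  rw [h]
  have e : a * (d * (k * x - 1) ^ 2) + b * (d * (k * y - 1) ^ 2)
      - d * (a * (k * x - 1) + b * (k * y - 1)) ^ 2
      = d * (a * b) * ((k * x - 1) - (k * y - 1)) ^ 2 := by
    linear_combination (-(d * (a * (k * x - 1) ^ 2 + b * (k * y - 1) ^ 2))) * hab
  nlinarith [e, mul_nonneg (mul_nonneg hd (mul_nonneg ha hb)) (sq_nonneg ((k * x - 1) - (k * y - 1)))]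

/-- For the `(p,q)`-generalized Mooney–Rivlin energy, viewed as a function `f` of
the `(3,3)` entry `A₃₃ > 0` of the upper-triangular matrix (with `A₁₃ = A₂₃ = 0`),
`f` is strictly convex on `(0,∞)`, tends to `+∞` as `A₃₃ → 0⁺` and as
`A₃₃ → ∞`, and has a unique minimizer on `(0,∞)`. -/
theorem pq_energy_unique_minimizer
    (μ₁ μ₂ lamBar p q : ℝ) (hμ₁ : 0 < μ₁) (hμ₂ : 0 < μ₂) (hlam : 0 < lamBar)
    (hp : 1 ≤ p) (hq : 1 ≤ q)
    (A₁₁ A₂₂ A₁₂ : ℝ) (hA₁₁ : 0 < A₁₁) (hA₂₂ : 0 < A₂₂)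
    (f : ℝ → ℝ)
    (hf : ∀ A₃₃ : ℝ, f A₃₃ =
      μ₁ / p * ((A₁₁ ^ 2 + A₂₂ ^ 2 + A₃₃ ^ 2 + A₁₂ ^ 2) ^ (p / 2) -
        (3 : ℝ) ^ (p / 2) - (3 : ℝ) ^ (p / 2 - 1) * p * Real.log (A₁₁ * A₂₂ * A₃₃)) +
      μ₂ / q * ((A₁₁ ^ 2 * A₂₂ ^ 2 + A₁₁ ^ 2 * A₃₃ ^ 2 + A₃₃ ^ 2 * A₁₂ ^ 2 +
          A₂₂ ^ 2 * A₃₃ ^ 2) ^ (q / 2) -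
        (3 : ℝ) ^ (q / 2) - 2 * (3 : ℝ) ^ (q / 2 - 1) * q * Real.log (A₁₁ * A₂₂ * A₃₃)) +
      lamBar / 2 * (A₁₁ * A₂₂ * A₃₃ - 1) ^ 2) :
    StrictConvexOn ℝ (Set.Ioi 0) f ∧
      Tendsto f (𝓝[>] (0 : ℝ)) atTop ∧
      Tendsto f atTop atTop ∧
      ∃! x : ℝ, x ∈ Set.Ioi (0 : ℝ) ∧ ∀ y ∈ Set.Ioi (0 : ℝ), f x ≤ f y := by
  have hp0 : 0 < p := lt_of_lt_of_le one_pos hp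
  have hq0 : 0 < q := lt_of_lt_of_le one_pos hq
  set k : ℝ := A₁₁ * A₂₂ with hk
  have hk0 : 0 < k := mul_pos hA₁₁ hA₂₂
  set b : ℝ := μ₁ / p * ((3:ℝ) ^ (p/2 - 1) * p) + μ₂ / q * (2 * (3:ℝ) ^ (q/2 - 1) * q)
    with hbdef
  have hb0 : 0 < b := by positivity
  set C : ℝ := -(μ₁ / p * (3:ℝ) ^ (p/2)) - μ₂ / q * (3:ℝ) ^ (q/2) - b * Real.log k with hCdef
  have hfeq : ∀ x : ℝ, 0 < x → f x
      = b * (-Real.log x)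
        + (μ₁ / p * (A₁₁ ^ 2 + A₂₂ ^ 2 + x ^ 2 + A₁₂ ^ 2) ^ (p/2)
          + μ₂ / q * (A₁₁ ^ 2 * A₂₂ ^ 2 + A₁₁ ^ 2 * x ^ 2 + x ^ 2 * A₁₂ ^ 2
              + A₂₂ ^ 2 * x ^ 2) ^ (q/2)
          + lamBar / 2 * (k * x - 1) ^ 2 + C) := by
    intro x hx
    rw [hf x]
    have hlg : Real.log (k * x) = Real.log k + Real.log x :=
      Real.log_mul hk0.ne' hx.ne'
    rw [hlg, hCdef, hbdef]
    ring
  -- convexity of the power terms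
  have hconv1 : ConvexOn ℝ Set.univ
      (fun x : ℝ => (A₁₁ ^ 2 + A₂₂ ^ 2 + x ^ 2 + A₁₂ ^ 2) ^ (p/2)) := by
    have h := myConvexOn_rpow_quad (A₁₁ ^ 2 + A₂₂ ^ 2 + A₁₂ ^ 2) 1 (p/2)
      (by positivity) zero_le_one (by linarith)
    have e : (fun x : ℝ => (A₁₁ ^ 2 + A₂₂ ^ 2 + A₁₂ ^ 2 + 1 * x ^ 2) ^ (p/2))
        = fun x : ℝ => (A₁₁ ^ 2 + A₂₂ ^ 2 + x ^ 2 + A₁₂ ^ 2) ^ (p/2) := by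
      funext x; congr 1; ring
    rwa [e] at h
  have hconv2 : ConvexOn ℝ Set.univ
      (fun x : ℝ => (A₁₁ ^ 2 * A₂₂ ^ 2 + A₁₁ ^ 2 * x ^ 2 + x ^ 2 * A₁₂ ^ 2
        + A₂₂ ^ 2 * x ^ 2) ^ (q/2)) := by
    have h := myConvexOn_rpow_quad (A₁₁ ^ 2 * A₂₂ ^ 2) (A₁₁ ^ 2 + A₁₂ ^ 2 + A₂₂ ^ 2) (q/2)
      (by positivity) (by positivity) (by linarith)
    have e : (fun x : ℝ => (A₁₁ ^ 2 * A₂₂ ^ 2 + (A₁₁ ^ 2 + A₁₂ ^ 2 + A₂₂ ^ 2) * x ^ 2) ^ (q/2))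
        = fun x : ℝ => (A₁₁ ^ 2 * A₂₂ ^ 2 + A₁₁ ^ 2 * x ^ 2 + x ^ 2 * A₁₂ ^ 2
            + A₂₂ ^ 2 * x ^ 2) ^ (q/2) := by
      funext x; congr 1; ring
    rwa [e] at h
  have h1' : ConvexOn ℝ Set.univ
      (fun x : ℝ => μ₁ / p * (A₁₁ ^ 2 + A₂₂ ^ 2 + x ^ 2 + A₁₂ ^ 2) ^ (p/2)) := by
    simpa [smul_eq_mul] using hconv1.smul (c := μ₁ / p) (by positivity)
  have h2' : ConvexOn ℝ Set.univ
      (fun x : ℝ => μ₂ / q * (A₁₁ ^ 2 * A₂₂ ^ 2 + A₁₁ ^ 2 * x ^ 2 + x ^ 2 * A₁₂ ^ 2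
        + A₂₂ ^ 2 * x ^ 2) ^ (q/2)) := by
    simpa [smul_eq_mul] using hconv2.smul (c := μ₂ / q) (by positivity)
  have h3' : ConvexOn ℝ Set.univ (fun x : ℝ => lamBar / 2 * (k * x - 1) ^ 2) :=
    myConvexOn_quad k (lamBar / 2) (by positivity)
  have hrest : ConvexOn ℝ (Set.Ioi (0:ℝ))
      (fun x : ℝ => μ₁ / p * (A₁₁ ^ 2 + A₂₂ ^ 2 + x ^ 2 + A₁₂ ^ 2) ^ (p/2)
          + μ₂ / q * (A₁₁ ^ 2 * A₂₂ ^ 2 + A₁₁ ^ 2 * x ^ 2 + x ^ 2 * A₁₂ ^ 2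
              + A₂₂ ^ 2 * x ^ 2) ^ (q/2)
          + lamBar / 2 * (k * x - 1) ^ 2 + C) := by
    have h := ((h1'.add h2').add h3').add (convexOn_const C convex_univ)
    exact h.subset (Set.subset_univ _) (convex_Ioi 0)
  have hlog : StrictConvexOn ℝ (Set.Ioi (0:ℝ)) (fun x : ℝ => b * (-Real.log x)) :=
    myStrictConvexOn_const_mul hb0 strictConcaveOn_log_Ioi.neg
  have hstrict : StrictConvexOn ℝ (Set.Ioi (0:ℝ)) f := by
    refine myStrictConvexOn_congr (hlog.add_convexOn hrest) ?_
    intro x hx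
    exact (hfeq x hx).symm
  -- lower bound near 0
  have hpos1 : ∀ x : ℝ, (0:ℝ) ≤ μ₁ / p * (A₁₁ ^ 2 + A₂₂ ^ 2 + x ^ 2 + A₁₂ ^ 2) ^ (p/2) := by
    intro x; positivity
  have hpos2 : ∀ x : ℝ, (0:ℝ) ≤ μ₂ / q * (A₁₁ ^ 2 * A₂₂ ^ 2 + A₁₁ ^ 2 * x ^ 2
      + x ^ 2 * A₁₂ ^ 2 + A₂₂ ^ 2 * x ^ 2) ^ (q/2) := by
    intro x; positivity
  have hlb : ∀ x : ℝ, 0 < x → C - b * Real.log x ≤ f x := by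
    intro x hx
    rw [hfeq x hx]
    have := hpos1 x
    have := hpos2 x
    nlinarith [sq_nonneg (k * x - 1), hlam.le]
  have h0 : Tendsto f (𝓝[>] (0:ℝ)) atTop := by
    have h1 : Tendsto (fun x : ℝ => -b * Real.log x) (𝓝[>] (0:ℝ)) atTop :=
      Real.tendsto_log_nhdsGT_zero.const_mul_atBot_of_neg (neg_lt_zero.mpr hb0)
    have h2 : Tendsto (fun x : ℝ => C - b * Real.log x) (𝓝[>] (0:ℝ)) atTop :=
      (tendsto_atTop_add_const_left _ C h1).congr (fun x => by ring)
    refine tendsto_atTop_mono' _ ?_ h2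
    exact Filter.eventually_of_mem self_mem_nhdsWithin (fun x hx => hlb x hx)
  -- tendsto at infinity
  have hftop : Tendsto f atTop atTop := by
    have h1 : Tendsto (fun x : ℝ => x * (lamBar / 2 * k ^ 2 * x + (-(lamBar * k) - b)))
        atTop atTop :=
      tendsto_id.atTop_mul_atTop₀
        (tendsto_atTop_add_const_right _ _ (tendsto_id.const_mul_atTop (by positivity)))
    have h2 : Tendsto (fun x : ℝ => C - b * x + lamBar / 2 * (k * x - 1) ^ 2) atTop atTop :=
      (tendsto_atTop_add_const_right _ (C + lamBar / 2) h1).congr (fun x => by ring)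
    refine tendsto_atTop_mono' _ ?_ h2
    filter_upwards [eventually_ge_atTop (1:ℝ)] with x hx1
    have hx : (0:ℝ) < x := lt_of_lt_of_le one_pos hx1
    rw [hfeq x hx]
    have hlg := Real.log_le_sub_one_of_pos hx
    have hbl : b * Real.log x ≤ b * (x - 1) := mul_le_mul_of_nonneg_left hlg hb0.le
    have := hpos1 x
    have := hpos2 x
    have hbx : b * Real.log x ≤ b * x := by clear_value b k C; nlinarith
    clear_value b k C
    linarith
  -- existence of the minimizer
  have hcont : ContinuousOn f (Set.Ioi (0:ℝ)) := hstrict.convexOn.continuousOn isOpen_Ioi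
  have h0' := h0.eventually (eventually_ge_atTop (f 1))
  rw [(nhdsGT_basis (0:ℝ)).eventually_iff] at h0'
  obtain ⟨ε, hε, hεbound⟩ := h0'
  obtain ⟨B, hB⟩ := eventually_atTop.mp (hftop.eventually (eventually_ge_atTop (f 1)))
  set a : ℝ := min (ε/2) 1 with hadef
  have ha0 : 0 < a := lt_min (by linarith) one_pos
  have ha1 : a ≤ 1 := min_le_right _ _
  set B' : ℝ := max B 1 with hB'def
  have hne : (Set.Icc a B').Nonempty := ⟨1, ha1, le_max_right _ _⟩
  have hsub : Set.Icc a B' ⊆ Set.Ioi (0:ℝ) := fun y hy => lt_of_lt_of_le ha0 hy.1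
  obtain ⟨x₀, hx₀mem, hx₀min⟩ := isCompact_Icc.exists_isMinOn hne (hcont.mono hsub)
  have hx₀pos : x₀ ∈ Set.Ioi (0:ℝ) := hsub hx₀mem
  have hf1 : f x₀ ≤ f 1 := isMinOn_iff.mp hx₀min 1 ⟨ha1, le_max_right _ _⟩
  have hglobal : ∀ y ∈ Set.Ioi (0:ℝ), f x₀ ≤ f y := by
    intro y hy
    rcases lt_or_ge y a with h | h
    · have hyε : y < ε := lt_of_lt_of_le (lt_of_lt_of_le h (min_le_left _ _)) (by linarith)
      have : f 1 ≤ f y := hεbound ⟨hy, hyε⟩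
      linarith
    · rcases le_or_gt y B' with h2 | h2
      · exact isMinOn_iff.mp hx₀min y ⟨h, h2⟩
      · have : f 1 ≤ f y := hB y (le_trans (le_max_left _ _) h2.le)
        linarith
  refine ⟨hstrict, h0, hftop, x₀, ⟨hx₀pos, hglobal⟩, ?_⟩
  rintro y ⟨hy, hymin⟩
  exact hstrict.eq_of_isMinOn
    (isMinOn_iff.mpr fun z hz => hymin z hz)
    (isMinOn_iff.mpr fun z hz => hglobal z hz) hy hx₀pos
end
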